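/- Let σ^1, σ^2, σ^3, σ^4 be 2×2 Hermitian matrices such that L(p) := ∑_α σ^α p_α is nonzero for every nonzero p ∈ ℝ^4 (non-degeneracy). Define the real symmetric 4×4 matrix g by det L(p) = −∑ g^{αβ} p_α p_β. Then g has signature (3,1): three positive eigenvalues and one negative eigenvalue (i.e. g is a Lorentzian metric). -/

import Mathlib

open Matrix

-- trace zero Hermitian 2x2 has nonpositive re of det
lemma herm_tr0_det {M : Matrix (Fin 2) (Fin 2) ℂ} (hM : M.IsHermitian)
    (htr : M 0 0 + M 1 1 = 0) : (M.det).re ≤ 0 := by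
  have h10 : M 1 0 = starRingEnd ℂ (M 0 1) := (hM.apply 1 0).symm
  have h00 : M 0 0 = ((M 0 0).re : ℂ) := (Complex.conj_eq_iff_re.mp (hM.apply 0 0)).symm
  have h11 : M 1 1 = -M 0 0 := by linear_combination htr
  rw [Matrix.det_fin_two, h10, Complex.mul_conj, h11, h00]
  simp [Complex.normSq]
  nlinarith [Complex.normSq_nonneg (M 0 1), sq_nonneg ((M 0 0).re)]

lemma herm_det_zero_eq_zero {M : Matrix (Fin 2) (Fin 2) ℂ} (hM : M.IsHermitian)
    (hd : M.det = 0) (hd1 : (1 + M).det = 1) : M = 0 := by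
  have h10 : M 1 0 = starRingEnd ℂ (M 0 1) := (hM.apply 1 0).symm
  have h00 : M 0 0 = ((M 0 0).re : ℂ) := (Complex.conj_eq_iff_re.mp (hM.apply 0 0)).symm
  have h11 : M 1 1 = ((M 1 1).re : ℂ) := (Complex.conj_eq_iff_re.mp (hM.apply 1 1)).symm
  rw [Matrix.det_fin_two] at hd hd1
  simp only [Matrix.add_apply, Matrix.one_apply_eq, Matrix.one_apply_ne (by decide : (0:Fin 2) ≠ 1),
    Matrix.one_apply_ne (by decide : (1:Fin 2) ≠ 0), zero_add] at hd1
  -- hd1 : (1 + M00)*(1 + M11) - M01*M10 = 1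
  have htr : M 0 0 + M 1 1 = 0 := by linear_combination hd1 - hd
  have hkey : -(((M 0 0).re : ℂ))^2 = Complex.normSq (M 0 1) := by
    have h11' : M 1 1 = -M 0 0 := by linear_combination htr
    have := hd
    rw [h11', h10, Complex.mul_conj] at this
    rw [← h00] ; linear_combination this
  have hre : -((M 0 0).re)^2 = Complex.normSq (M 0 1) := by exact_mod_cast hkey
  have h001 : (M 0 0).re = 0 := by nlinarith [Complex.normSq_nonneg (M 0 1)]
  have h01 : M 0 1 = 0 := by
    have : Complex.normSq (M 0 1) = 0 := by rw [← hre, h001]; ring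
    exact Complex.normSq_eq_zero.mp this
  have hM00 : M 0 0 = 0 := by rw [h00, h001]; simp
  have hM11 : M 1 1 = 0 := by rw [hM00] at htr; simpa using htr
  ext i j
  fin_cases i <;> fin_cases j <;> simp [hM00, hM11, h01, h10]

theorem metric_is_lorentzian
    (σ : Fin 4 → Matrix (Fin 2) (Fin 2) ℂ)
    (hherm : ∀ α, (σ α).IsHermitian)
    (hnondeg : ∀ p : Fin 4 → ℝ, p ≠ 0 → (∑ α, (p α : ℂ) • σ α) ≠ 0)
    (g : Matrix (Fin 4) (Fin 4) ℝ) (hg : g.IsHermitian)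
    (hdet : ∀ p : Fin 4 → ℝ,
      (∑ α, (p α : ℂ) • σ α).det = -((p ⬝ᵥ (g *ᵥ p) : ℝ) : ℂ)) :
    (Finset.univ.filter (fun i => 0 < hg.eigenvalues i)).card = 3 ∧
    (Finset.univ.filter (fun i => hg.eigenvalues i < 0)).card = 1 := by
  classical
  set L : (Fin 4 → ℝ) → Matrix (Fin 2) (Fin 2) ℂ := fun p => ∑ α, (p α : ℂ) • σ α with hLdef
  have hLadd : ∀ p q, L (p + q) = L p + L q := by
    intro p q
    simp only [hLdef, ← Finset.sum_add_distrib, Pi.add_apply, Complex.ofReal_add, add_smul]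
  have hLsmul : ∀ (c : ℝ) p, L (c • p) = (c : ℂ) • L p := by
    intro c p
    simp only [hLdef, Finset.smul_sum, Pi.smul_apply, smul_eq_mul, Complex.ofReal_mul, smul_smul]
  have hLherm : ∀ p, (L p).IsHermitian := by
    intro p
    unfold Matrix.IsHermitian
    rw [hLdef]
    rw [Matrix.conjTranspose_sum]
    refine Finset.sum_congr rfl fun α _ => ?_
    rw [Matrix.conjTranspose_smul, (hherm α).eq]
    simp
  have hgs : ∀ i j, g i j = g j i := by
    intro i j
    have h := hg.apply j i
    rwa [star_trivial] at h
  have hsymm : ∀ p q : Fin 4 → ℝ, p ⬝ᵥ (g *ᵥ q) = q ⬝ᵥ (g *ᵥ p) := by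
    intro p q
    simp only [dotProduct, mulVec, dotProduct, Finset.mul_sum]
    rw [Finset.sum_comm]
    refine Finset.sum_congr rfl fun i _ => Finset.sum_congr rfl fun j _ => ?_
    rw [hgs i j]; ring
  -- surjectivity: get p₀ with L p₀ = 1
  obtain ⟨p₀, hp₀⟩ : ∃ p : Fin 4 → ℝ, L p = 1 := by
    have him : ∀ p : Fin 4 → ℝ, (L p 0 0).im = 0 ∧ (L p 1 1).im = 0 := by
      intro p
      exact ⟨Complex.conj_eq_iff_im.mp ((hLherm p).apply 0 0),
        Complex.conj_eq_iff_im.mp ((hLherm p).apply 1 1)⟩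
    let φ : (Fin 4 → ℝ) →ₗ[ℝ] (Fin 4 → ℝ) :=
      { toFun := fun p => ![(L p 0 0).re, (L p 1 1).re, (L p 0 1).re, (L p 0 1).im]
        map_add' := by
          intro p q
          funext i
          fin_cases i <;> simp [hLadd, Matrix.add_apply]
        map_smul' := by
          intro c p
          funext i
          fin_cases i <;>
            simp [hLsmul, Matrix.smul_apply, Complex.real_smul, Complex.mul_re, Complex.mul_im] }
    have hφinj : Function.Injective φ := by
      rw [injective_iff_map_eq_zero]
      intro p hp
      by_contra hpne
      apply hnondeg p hpne
      have h0 : (L p 0 0).re = 0 := congrFun hp 0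
      have h1 : (L p 1 1).re = 0 := congrFun hp 1
      have h2 : (L p 0 1).re = 0 := congrFun hp 2
      have h3 : (L p 0 1).im = 0 := congrFun hp 3
      have e00 : L p 0 0 = 0 := Complex.ext h0 (him p).1
      have e11 : L p 1 1 = 0 := Complex.ext h1 (him p).2
      have e01 : L p 0 1 = 0 := Complex.ext h2 h3
      have e10 : L p 1 0 = 0 := by
        rw [← (hLherm p).apply 1 0, e01, star_zero]
      show L p = 0
      ext i j
      fin_cases i <;> fin_cases j <;> simp [e00, e01, e10, e11]
    obtain ⟨p, hp⟩ := (LinearMap.injective_iff_surjective.mp hφinj) ![1, 1, 0, 0]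
    refine ⟨p, ?_⟩
    have h0 : (L p 0 0).re = 1 := congrFun hp 0
    have h1 : (L p 1 1).re = 1 := congrFun hp 1
    have h2 : (L p 0 1).re = 0 := congrFun hp 2
    have h3 : (L p 0 1).im = 0 := congrFun hp 3
    have e00 : L p 0 0 = 1 := Complex.ext h0 (him p).1
    have e11 : L p 1 1 = 1 := Complex.ext h1 (him p).2
    have e01 : L p 0 1 = 0 := Complex.ext h2 h3
    have e10 : L p 1 0 = 0 := by rw [← (hLherm p).apply 1 0, e01, star_zero]
    ext i j
    fin_cases i <;> fin_cases j <;>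
      simp [e00, e01, e10, e11, Matrix.one_apply]
  have hQp₀ : p₀ ⬝ᵥ (g *ᵥ p₀) = -1 := by
    have h : (L p₀).det = -((p₀ ⬝ᵥ g *ᵥ p₀ : ℝ) : ℂ) := hdet p₀
    rw [hp₀, Matrix.det_one] at h
    have h2 : ((p₀ ⬝ᵥ g *ᵥ p₀ : ℝ) : ℂ) = ((-1 : ℝ) : ℂ) := by
      push_cast; linear_combination h
    exact_mod_cast h2
  -- eigen data
  set lam := hg.eigenvalues with hlam
  set w : Fin 4 → (Fin 4 → ℝ) := fun i => ⇑(hg.eigenvectorBasis i) with hw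
  have hwg : ∀ i, g *ᵥ w i = lam i • w i := fun i => hg.mulVec_eigenvectorBasis i
  have hdot : ∀ i j, w i ⬝ᵥ w j = if i = j then 1 else 0 := by
    intro i j
    have h := orthonormal_iff_ite.mp hg.eigenvectorBasis.orthonormal i j
    simpa [hw, PiLp.inner_apply, dotProduct, mul_comm] using h
  have hQw : ∀ i, w i ⬝ᵥ (g *ᵥ w i) = lam i := by
    intro i
    rw [hwg, dotProduct_smul, smul_eq_mul, hdot]
    simp
  -- no zero eigenvalues
  have hne : ∀ i, lam i ≠ 0 := by
    intro i h0
    have hv : g *ᵥ w i = 0 := by rw [hwg, h0, zero_smul]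
    have hwne : w i ≠ 0 := by
      intro h
      have := hdot i i
      rw [h] at this
      simp at this
    have hQv : w i ⬝ᵥ (g *ᵥ w i) = 0 := by rw [hv, dotProduct_zero]
    have hq1 : (p₀ + w i) ⬝ᵥ (g *ᵥ (p₀ + w i)) = p₀ ⬝ᵥ (g *ᵥ p₀) := by
      rw [mulVec_add, dotProduct_add, add_dotProduct, add_dotProduct, hsymm (w i) p₀, hv]
      simp
    have hdv : (L (w i)).det = 0 := by
      have h : (L (w i)).det = -((w i ⬝ᵥ g *ᵥ w i : ℝ) : ℂ) := hdet (w i)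
      rw [hQv] at h
      simpa using h
    have hd1 : (1 + L (w i)).det = 1 := by
      have h : (L (p₀ + w i)).det = -(((p₀ + w i) ⬝ᵥ g *ᵥ (p₀ + w i) : ℝ) : ℂ) := hdet _
      rw [hq1, hQp₀] at h
      rw [hLadd, hp₀] at h
      simpa using h
    exact hnondeg (w i) hwne (herm_det_zero_eq_zero (hLherm (w i)) hdv hd1)
  -- at most one negative
  have hreal : ∀ p : Fin 4 → ℝ, (L p).trace = (((L p).trace.re : ℝ) : ℂ) := by
    intro p
    have h1 : ((L p) 0 0).im = 0 := Complex.conj_eq_iff_im.mp ((hLherm p).apply 0 0)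
    have h2 : ((L p) 1 1).im = 0 := Complex.conj_eq_iff_im.mp ((hLherm p).apply 1 1)
    rw [Matrix.trace_fin_two]
    apply Complex.ext <;> simp [h1, h2]
  have huniq : ∀ i j, lam i < 0 → lam j < 0 → i = j := by
    intro i j hi hj
    by_contra hij
    have htrne : ∀ k, lam k < 0 → ((L (w k)).trace).re ≠ 0 := by
      intro k hk h0
      have htr0 : (L (w k)) 0 0 + (L (w k)) 1 1 = 0 := by
        rw [← Matrix.trace_fin_two, hreal (w k), h0]
        simp
      have hle := herm_tr0_det (hLherm (w k)) htr0
      have hdk : (L (w k)).det = -((w k ⬝ᵥ g *ᵥ w k : ℝ) : ℂ) := hdet (w k)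
      rw [hQw k] at hdk
      rw [hdk] at hle
      simp at hle
      linarith
    set s : ℝ := ((L (w j)).trace).re with hs
    set t : ℝ := -((L (w i)).trace).re with ht
    set r : Fin 4 → ℝ := s • w i + t • w j with hr
    have hrQ : r ⬝ᵥ (g *ᵥ r) = s ^ 2 * lam i + t ^ 2 * lam j := by
      rw [hr, mulVec_add, mulVec_smul, mulVec_smul, hwg, hwg]
      rw [dotProduct_add, add_dotProduct, add_dotProduct]
      simp only [smul_dotProduct, dotProduct_smul, smul_eq_mul, hdot, if_pos rfl,
        if_neg hij, if_neg (Ne.symm hij), if_true]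
      ring
    have hrQneg : r ⬝ᵥ (g *ᵥ r) < 0 := by
      rw [hrQ]
      have hsne : s ≠ 0 := htrne j hj
      have h1 : s ^ 2 * lam i < 0 := mul_neg_of_pos_of_neg (by positivity) hi
      have h2 : t ^ 2 * lam j ≤ 0 := mul_nonpos_of_nonneg_of_nonpos (sq_nonneg t) (le_of_lt hj)
      linarith
    have hrne : r ≠ 0 := by
      intro h
      have hd : w i ⬝ᵥ r = s := by
        rw [hr, dotProduct_add]
        simp only [dotProduct_smul, smul_eq_mul, hdot, if_pos rfl, if_neg hij, if_true]
        ring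
      rw [h, dotProduct_zero] at hd
      exact htrne j hj hd.symm
    have hLr : L r = (s : ℂ) • L (w i) + (t : ℂ) • L (w j) := by
      rw [hr, hLadd, hLsmul, hLsmul]
    have htr : (L r) 0 0 + (L r) 1 1 = 0 := by
      have htrr : (L r).trace = 0 := by
        rw [hLr, Matrix.trace_add, Matrix.trace_smul, Matrix.trace_smul,
          hreal (w i), hreal (w j)]
        rw [hs, ht]
        push_cast
        ring_nf
      rwa [Matrix.trace_fin_two] at htrr
    have hdetle := herm_tr0_det (hLherm r) htr
    have hdr : (L r).det = -((r ⬝ᵥ g *ᵥ r : ℝ) : ℂ) := hdet r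
    rw [hdr] at hdetle
    simp at hdetle
    linarith
  -- at least one negative
  obtain ⟨j, hj⟩ : ∃ j, lam j < 0 := by
    by_contra h
    push_neg at h
    have hps := (hg.posSemidef_iff_eigenvalues_nonneg.mpr (fun i => h i)).dotProduct_mulVec_nonneg p₀
    rw [show star p₀ = p₀ from rfl] at hps
    rw [hQp₀] at hps
    linarith
  -- counting
  have hfneg : Finset.univ.filter (fun i => lam i < 0) = {j} := by
    ext i
    simp only [Finset.mem_filter, Finset.mem_univ, true_and, Finset.mem_singleton]
    exact ⟨fun hi => huniq i j hi hj, fun h => h ▸ hj⟩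
  have hc1 : (Finset.univ.filter (fun i => lam i < 0)).card = 1 := by
    rw [hfneg]; rfl
  have hposeq : Finset.univ.filter (fun i => 0 < lam i)
      = Finset.univ.filter (fun i => ¬ lam i < 0) := by
    ext i
    simp only [Finset.mem_filter, Finset.mem_univ, true_and]
    constructor
    · intro h h'; linarith
    · intro h
      rcases (hne i).lt_or_gt with h' | h'
      · exact absurd h' h
      · exact h'
  have hcard := Finset.card_filter_add_card_filter_not
    (s := (Finset.univ : Finset (Fin 4))) (p := fun i => lam i < 0)
  rw [hc1] at hcard
  simp only [Finset.card_univ, Fintype.card_fin] at hcard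
  refine ⟨?_, hc1⟩
  rw [hposeq]
  omega
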